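/- Let Ŝ be a sampling of [n] with |Ŝ| = τ ≥ 1 almost surely. Then λ'(P(Ŝ)) = τ, where λ'(M) = sup{ h^T M h : h^T Diag(M) h ≤ 1 }. -/

import Mathlib

open Finset Matrix BigOperators

noncomputable def probMatrix {n : ℕ} {Ω : Type*} [Fintype Ω]
    (w : Ω → ℝ) (Shat : Ω → Finset (Fin n)) : Matrix (Fin n) (Fin n) ℝ :=
  fun i j => ∑ ω, if i ∈ Shat ω ∧ j ∈ Shat ω then w ω else 0

lemma quadA {n : ℕ} {Ω : Type*} [Fintype Ω] (w : Ω → ℝ) (Shat : Ω → Finset (Fin n))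
    (h : Fin n → ℝ) :
    h ⬝ᵥ (probMatrix w Shat).mulVec h = ∑ ω, w ω * (∑ i ∈ Shat ω, h i)^2 := by
  unfold probMatrix
  simp only [dotProduct, mulVec, Finset.mul_sum, Finset.sum_mul, mul_ite, ite_mul,
    zero_mul, mul_zero]
  rw [Finset.sum_congr rfl (fun y _ => Finset.sum_comm), Finset.sum_comm]
  apply Finset.sum_congr rfl
  intro ω _
  simp only [ite_and, Finset.sum_ite_irrel, Finset.sum_const_zero, Finset.sum_ite_mem,
    Finset.univ_inter]
  rw [sq, Finset.sum_mul_sum, Finset.mul_sum]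
  apply Finset.sum_congr rfl
  intro y _
  rw [Finset.mul_sum]
  exact Finset.sum_congr rfl fun x _ => by ring

lemma quadB {n : ℕ} {Ω : Type*} [Fintype Ω] (w : Ω → ℝ) (Shat : Ω → Finset (Fin n))
    (h : Fin n → ℝ) :
    h ⬝ᵥ (Matrix.diagonal fun i => probMatrix w Shat i i).mulVec h
      = ∑ ω, w ω * ∑ i ∈ Shat ω, (h i)^2 := by
  unfold probMatrix
  simp only [dotProduct, mulVec_diagonal, and_self, Finset.sum_mul, Finset.mul_sum,
    ite_mul, mul_ite, mul_zero, zero_mul]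
  rw [Finset.sum_comm]
  apply Finset.sum_congr rfl
  intro ω _
  simp only [Finset.sum_ite_mem, Finset.univ_inter, Finset.mul_sum]
  exact Finset.sum_congr rfl fun i _ => by ring

/-- Normalized largest eigenvalue: `λ′(M) = sup { hᵀ M h : hᵀ Diag(M) h ≤ 1 }`. -/
noncomputable def lambdaPrime {n : ℕ} (M : Matrix (Fin n) (Fin n) ℝ) : ℝ :=
  sSup {r : ℝ | ∃ h : Fin n → ℝ,
    h ⬝ᵥ (Matrix.diagonal fun i => M i i).mulVec h ≤ 1 ∧ r = h ⬝ᵥ M.mulVec h}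

theorem lambdaPrime_eq_tau
    {n : ℕ} {Ω : Type*} [Fintype Ω]
    (w : Ω → ℝ) (hw0 : ∀ ω, 0 ≤ w ω) (hw1 : ∑ ω, w ω = 1)
    (Shat : Ω → Finset (Fin n)) (τ : ℕ) (hτ : 1 ≤ τ)
    (hcard : ∀ ω, w ω ≠ 0 → (Shat ω).card = τ) :
    lambdaPrime (probMatrix w Shat) = τ := by
  have hτ0 : (0:ℝ) < τ := by exact_mod_cast hτ
  set S : Set ℝ := {r : ℝ | ∃ h : Fin n → ℝ,
    h ⬝ᵥ (Matrix.diagonal fun i => probMatrix w Shat i i).mulVec h ≤ 1 ∧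
      r = h ⬝ᵥ (probMatrix w Shat).mulVec h} with hS
  -- upper bound
  have hub : ∀ r ∈ S, r ≤ (τ:ℝ) := by
    rintro r ⟨h, hD, rfl⟩
    rw [quadA]
    rw [quadB] at hD
    calc ∑ ω, w ω * (∑ i ∈ Shat ω, h i)^2
        ≤ ∑ ω, w ω * ((τ:ℝ) * ∑ i ∈ Shat ω, (h i)^2) := by
          apply Finset.sum_le_sum
          intro ω _
          by_cases hω : w ω = 0
          · simp [hω]
          · apply mul_le_mul_of_nonneg_left _ (hw0 ω)
            have := sq_sum_le_card_mul_sum_sq (s := Shat ω) (f := h)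
            rw [hcard ω hω] at this
            exact_mod_cast this
      _ = (τ:ℝ) * ∑ ω, w ω * ∑ i ∈ Shat ω, (h i)^2 := by
          rw [Finset.mul_sum]; exact Finset.sum_congr rfl fun ω _ => by ring
      _ ≤ (τ:ℝ) * 1 := by
          apply mul_le_mul_of_nonneg_left hD (le_of_lt hτ0)
      _ = (τ:ℝ) := mul_one _
  -- witness
  have hmem : (τ:ℝ) ∈ S := by
    refine ⟨fun _ => (Real.sqrt τ)⁻¹, ?_, ?_⟩
    · rw [quadB]
      have hc : ((Real.sqrt τ)⁻¹)^2 = (τ:ℝ)⁻¹ := by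
        rw [← Real.sqrt_inv, Real.sq_sqrt (by positivity)]
      have : ∑ ω, w ω * ∑ i ∈ Shat ω, ((Real.sqrt τ)⁻¹)^2 = ∑ ω, w ω := by
        apply Finset.sum_congr rfl
        intro ω _
        by_cases hω : w ω = 0
        · simp [hω]
        · rw [Finset.sum_const, hcard ω hω, nsmul_eq_mul, hc,
            mul_inv_cancel₀ (ne_of_gt hτ0), mul_one]
      rw [this, hw1]
    · rw [quadA]
      have hc : ((Real.sqrt τ)⁻¹)^2 = (τ:ℝ)⁻¹ := by
        rw [← Real.sqrt_inv, Real.sq_sqrt (by positivity)]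
      have : ∑ ω, w ω * (∑ i ∈ Shat ω, (Real.sqrt τ)⁻¹)^2 = ∑ ω, w ω * τ := by
        apply Finset.sum_congr rfl
        intro ω _
        by_cases hω : w ω = 0
        · simp [hω]
        · rw [Finset.sum_const, hcard ω hω, nsmul_eq_mul, mul_pow, hc]
          field_simp
      rw [this, ← Finset.sum_mul, hw1, one_mul]
  exact le_antisymm (csSup_le ⟨_, hmem⟩ hub) (le_csSup ⟨_, hub⟩ hmem)
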